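/- Let n be odd and such that K_n(t,u) > 0 for all t, u ∈ [0,1]. Then the system of Hammerstein equations ∫₀¹ K_n(t,u)·f(u)² du = g(t), ∫₀¹ K_n(t,u)·g(u)² du = f(t) (for all t ∈ [0,1]) has at least two positive continuous solutions (f,g) with f ≠ g; specifically, with f₁(t) = c_n·(r_n(t − 1/2) + 2) and g₁(t) = 1, both (f₁, g₁) and (g₁, f₁) are solutions. -/

import Mathlib

open Set MeasureTheory Filter

/-- For odd `n`, the real `n`-th root of `x` (the unique `y` with `y^n = x`). -/
noncomputable def oddRoot (n : ℕ) (x : ℝ) : ℝ :=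
  if 0 ≤ x then x ^ ((n:ℝ)⁻¹) else -((-x) ^ ((n:ℝ)⁻¹))

/-- `b_n = (1/ⁿ√4)^(n-1) · (1 + 2/n)`. -/
noncomputable def bseq (n : ℕ) : ℝ :=
  (1 / oddRoot n 4) ^ (n - 1) * (1 + 2 / (n : ℝ))

/-- `c_n > 0` is defined by `c_n³ = (1/2)·∫_{-1/2}^{1/2} du/(2 + ⁿ√u)²`. -/
noncomputable def cseq (n : ℕ) : ℝ :=
  ((1 / 2) * ∫ u in (-(1/2) : ℝ)..(1/2), 1 / (2 + oddRoot n u) ^ 2) ^ ((3:ℝ)⁻¹)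

/-- The kernel `K_n(t,u)`. -/
noncomputable def Kn (n : ℕ) (t u : ℝ) : ℝ :=
  (1 - bseq n * (cseq n) ^ 3 * oddRoot n (u - 1/2) *
      (oddRoot n ((u - 1/2) ^ 2) - 4) ^ 2 * oddRoot n (t - 1/2)) /
    ((cseq n) ^ 2 * (oddRoot n (u - 1/2) + 2) ^ 2)

section Aux
variable {n : ℕ}

lemma oddRoot_of_nonneg {x : ℝ} (hx : 0 ≤ x) : oddRoot n x = x ^ ((n:ℝ)⁻¹) := if_pos hx

lemma inv_cast_ne_zero (hn : n ≠ 0) : ((n:ℝ))⁻¹ ≠ 0 :=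
  inv_ne_zero (Nat.cast_ne_zero.2 hn)

lemma oddRoot_neg (hn : n ≠ 0) (x : ℝ) : oddRoot n (-x) = - oddRoot n x := by
  rcases lt_trichotomy x 0 with h | h | h
  · rw [oddRoot, if_pos (by linarith), oddRoot, if_neg (not_le.2 h), neg_neg]
  · subst h
    simp [oddRoot, Real.zero_rpow (inv_cast_ne_zero hn)]
  · rw [oddRoot, if_neg (by simp; linarith), oddRoot, if_pos h.le, neg_neg]

lemma oddRoot_pow (hn : Odd n) (x : ℝ) : (oddRoot n x) ^ n = x := by
  have hn0 : n ≠ 0 := hn.pos.ne'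
  rcases le_or_gt 0 x with h | h
  · rw [oddRoot_of_nonneg h, Real.rpow_inv_natCast_pow h hn0]
  · rw [oddRoot, if_neg (not_le.2 h), hn.neg_pow,
      Real.rpow_inv_natCast_pow (by linarith) hn0, neg_neg]

lemma oddRoot_unique (hn : Odd n) {x y : ℝ} (h : y ^ n = x) : oddRoot n x = y := by
  apply hn.strictMono_pow.injective
  show oddRoot n x ^ n = y ^ n
  rw [oddRoot_pow hn, h]

lemma oddRoot_sq (hn : Odd n) (x : ℝ) : oddRoot n (x ^ 2) = (oddRoot n x) ^ 2 :=
  oddRoot_unique hn (by rw [← pow_mul, mul_comm, pow_mul, oddRoot_pow hn])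

lemma abs_oddRoot_le_one (hn : Odd n) {x : ℝ} (hx : |x| ≤ 1) : |oddRoot n x| ≤ 1 := by
  have h : |oddRoot n x| ^ n = |x| := by rw [← abs_pow, oddRoot_pow hn]
  exact (pow_le_one_iff_of_nonneg (abs_nonneg _) hn.pos.ne').1 (h ▸ hx)

lemma oddRoot_add_two_pos (hn : Odd n) {x : ℝ} (hx : |x| ≤ 1) : 0 < oddRoot n x + 2 := by
  have h := (abs_le.1 (abs_oddRoot_le_one hn hx)).1
  linarith

lemma continuous_oddRoot (hn : n ≠ 0) : Continuous (oddRoot n) := by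
  have h1 : Continuous fun x : ℝ => x ^ ((n:ℝ)⁻¹) :=
    Real.continuous_rpow_const (by positivity)
  have h2 : Continuous fun x : ℝ => -((-x) ^ ((n:ℝ)⁻¹)) := (h1.comp continuous_neg).neg
  have h3 : Continuous fun x : ℝ =>
      if (0:ℝ) ≤ x then x ^ ((n:ℝ)⁻¹) else -((-x) ^ ((n:ℝ)⁻¹)) := by
    apply Continuous.if_le h1 h2 continuous_const continuous_id
    intro a ha
    simp only [id_eq] at ha
    rw [← ha]
    simp [Real.zero_rpow (inv_cast_ne_zero hn)]
  exact h3

lemma integral_odd_fn {F : ℝ → ℝ} (hc : Continuous F) (hodd : ∀ x, F (-x) = -F x) (a : ℝ) :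
    ∫ x in (-a)..a, F x = 0 := by
  have h0 := intervalIntegral.integral_comp_neg (a := (0:ℝ)) (b := a) (f := F)
  simp only [hodd, intervalIntegral.integral_neg, neg_zero] at h0
  have h1 : ∫ x in (-a)..(0:ℝ), F x = - ∫ x in (0:ℝ)..a, F x := h0.symm
  have h2 := intervalIntegral.integral_add_adjacent_intervals (μ := volume)
    (hc.intervalIntegrable (-a) 0) (hc.intervalIntegrable 0 a)
  rw [h1] at h2
  linarith [h2]

lemma integral_even_fn {F : ℝ → ℝ} (hc : Continuous F) (heven : ∀ x, F (-x) = F x) (a : ℝ) :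
    ∫ x in (-a)..a, F x = 2 * ∫ x in (0:ℝ)..a, F x := by
  have h0 := intervalIntegral.integral_comp_neg (a := (0:ℝ)) (b := a) (f := F)
  simp only [heven, neg_zero] at h0
  have h2 := intervalIntegral.integral_add_adjacent_intervals (μ := volume)
    (hc.intervalIntegrable (-a) 0) (hc.intervalIntegrable 0 a)
  rw [← h0] at h2
  linarith [h2]

lemma Apos (hn : Odd n) :
    0 < ∫ u in (-(1/2):ℝ)..(1/2), 1 / (2 + oddRoot n u) ^ 2 := by
  have hden : ∀ u ∈ uIcc (-(1/2):ℝ) (1/2), 0 < 2 + oddRoot n u := by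
    intro u hu
    rw [uIcc_of_le (by norm_num)] at hu
    have hu' : |u| ≤ 1 := abs_le.2 ⟨by linarith [hu.1], by linarith [hu.2]⟩
    linarith [oddRoot_add_two_pos hn hu']
  have hc : ContinuousOn (fun u : ℝ => 1 / (2 + oddRoot n u) ^ 2)
      (uIcc (-(1/2):ℝ) (1/2)) := by
    apply ContinuousOn.div continuousOn_const
    · exact ((continuous_const.add (continuous_oddRoot hn.pos.ne')).pow 2).continuousOn
    · intro u hu
      exact pow_ne_zero 2 (hden u hu).ne'
  apply intervalIntegral.intervalIntegral_pos_of_pos_on (hc.intervalIntegrable)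
  · intro x hx
    have hx' : x ∈ uIcc (-(1/2):ℝ) (1/2) := by
      rw [uIcc_of_le (by norm_num)]
      exact Ioo_subset_Icc_self hx
    have := hden x hx'
    positivity
  · norm_num

lemma cseq_cube (hn : Odd n) :
    (cseq n) ^ 3 = (1 / 2) * ∫ u in (-(1/2):ℝ)..(1/2), 1 / (2 + oddRoot n u) ^ 2 := by
  have hA := Apos hn
  have h0 : (0:ℝ) ≤ (1 / 2) * ∫ u in (-(1/2):ℝ)..(1/2), 1 / (2 + oddRoot n u) ^ 2 := by
    linarith
  have := Real.rpow_inv_natCast_pow h0 (by norm_num : (3:ℕ) ≠ 0)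
  simpa [cseq] using this

lemma cseq_pos (hn : Odd n) : 0 < cseq n := by
  have hA := Apos hn
  exact Real.rpow_pos_of_pos (by linarith) _

lemma int_odd1 (hn : Odd n) :
    ∫ u in (0:ℝ)..1, oddRoot n (u - 1/2) * ((oddRoot n (u - 1/2)) ^ 2 - 4) ^ 2 = 0 := by
  have hn0 : n ≠ 0 := hn.pos.ne'
  have hc : Continuous fun v : ℝ => oddRoot n v * ((oddRoot n v) ^ 2 - 4) ^ 2 :=
    (continuous_oddRoot hn0).mul
      ((((continuous_oddRoot hn0).pow 2).sub continuous_const).pow 2)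
  have h := intervalIntegral.integral_comp_sub_right
    (f := fun v : ℝ => oddRoot n v * ((oddRoot n v) ^ 2 - 4) ^ 2) (a := (0:ℝ)) (b := 1) (1/2)
  rw [h, show (0:ℝ) - 1/2 = -(1/2) by norm_num, show (1:ℝ) - 1/2 = 1/2 by norm_num]
  apply integral_odd_fn hc _ (1/2)
  intro x
  rw [oddRoot_neg hn0]
  ring

lemma int_odd2 (hn : Odd n) :
    ∫ v in (-(1/2):ℝ)..(1/2),
      (oddRoot n v ^ 3 + 4 * oddRoot n v) = 0 := by
  have hn0 : n ≠ 0 := hn.pos.ne'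
  have hc : Continuous fun v : ℝ => oddRoot n v ^ 3 + 4 * oddRoot n v :=
    ((continuous_oddRoot hn0).pow 3).add (continuous_const.mul (continuous_oddRoot hn0))
  apply integral_odd_fn hc _ (1/2)
  intro x
  rw [oddRoot_neg hn0]
  ring

lemma int_sq (hn : Odd n) :
    ∫ v in (-(1/2):ℝ)..(1/2), (oddRoot n v) ^ 2
      = 2 * ((1/2:ℝ) ^ (2/(n:ℝ) + 1)) / (2/(n:ℝ) + 1) := by
  have hn0 : n ≠ 0 := hn.pos.ne'
  have hc : Continuous fun v : ℝ => (oddRoot n v) ^ 2 := (continuous_oddRoot hn0).pow 2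
  rw [integral_even_fn hc (fun x => by rw [oddRoot_neg hn0]; ring) (1/2)]
  have hEq : EqOn (fun v : ℝ => (oddRoot n v) ^ 2) (fun v : ℝ => v ^ (2/(n:ℝ)))
      (uIcc (0:ℝ) (1/2)) := by
    intro v hv
    rw [uIcc_of_le (by norm_num)] at hv
    have hv0 : (0:ℝ) ≤ v := hv.1
    show (oddRoot n v) ^ 2 = v ^ (2/(n:ℝ))
    rw [oddRoot_of_nonneg hv0, ← Real.rpow_natCast (v ^ ((n:ℝ)⁻¹)) 2,
      ← Real.rpow_mul hv0]
    norm_num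
    rw [div_eq_mul_inv, mul_comm]
  rw [intervalIntegral.integral_congr hEq,
    integral_rpow (Or.inl (by
      have : (0:ℝ) ≤ 2/(n:ℝ) := by positivity
      linarith))]
  rw [Real.zero_rpow (by positivity : 2/(n:ℝ) + 1 ≠ 0)]
  ring

lemma bseq_key (hn : Odd n) :
    bseq n * (4 * (2 * ((1/2:ℝ) ^ (2/(n:ℝ) + 1)) / (2/(n:ℝ) + 1))) = 1 := by
  have hn0 : n ≠ 0 := hn.pos.ne'
  have hq : (0:ℝ) < n := by exact_mod_cast hn.pos
  set q : ℝ := (n:ℝ) with hqdef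
  set α : ℝ := (4:ℝ) ^ (q⁻¹) with hαdef
  have hα : 0 < α := Real.rpow_pos_of_pos (by norm_num) _
  have hαn : α ^ n = 4 := Real.rpow_inv_natCast_pow (by norm_num) hn0
  set g : ℝ := (1/2:ℝ) ^ (2/q) with hgdef
  have hg : 0 < g := Real.rpow_pos_of_pos (by norm_num) _
  have hgα : g * α = 1 := by
    have h1 : g = ((1/4:ℝ)) ^ (q⁻¹) := by
      rw [hgdef, show 2/q = (2:ℝ) * q⁻¹ by ring, Real.rpow_mul (by norm_num : (0:ℝ) ≤ 1/2),
        show ((1/2:ℝ) ^ (2:ℝ)) = 1/4 by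
          rw [show (2:ℝ) = ((2:ℕ):ℝ) by norm_num, Real.rpow_natCast]; norm_num]
    rw [h1, hαdef, ← Real.mul_rpow (by norm_num) (by norm_num)]
    norm_num
  have hαne : α ≠ 0 := hα.ne'
  have hsucc : α * α ^ (n - 1) = 4 := by
    rw [← pow_succ', Nat.sub_add_cancel hn.pos, hαn]
  have hA1 : α ^ (n - 1) = 4 * g := by
    have h1 : α ^ (n - 1) = 4 / α := by
      rw [eq_div_iff hαne]
      linear_combination hsucc
    have h2 : g = 1 / α := by
      rw [eq_div_iff hαne]
      linear_combination hgα
    rw [h1, h2]; ring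
  have hpow : (1/2:ℝ) ^ (2/q + 1) = g * (1/2) := by
    rw [hgdef, Real.rpow_add (by norm_num : (0:ℝ) < 1/2), Real.rpow_one]
  have hb : bseq n = (1 / (4 * g)) * (1 + 2/q) := by
    rw [bseq, oddRoot_of_nonneg (by norm_num : (0:ℝ) ≤ 4)]
    rw [show ((4:ℝ) ^ ((n:ℝ)⁻¹)) = α by rw [hαdef, hqdef], one_div, inv_pow, hA1, one_div]
  rw [hb, hpow]
  have hq2 : q + 2 ≠ 0 := by positivity
  have hq0 : q ≠ 0 := by positivity
  field_simp
  ring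
end Aux

theorem stmt_13
    (n : ℕ) (hn : Odd n)
    (hKpos : ∀ t ∈ Icc (0:ℝ) 1, ∀ u ∈ Icc (0:ℝ) 1, 0 < Kn n t u)
    (f₁ g₁ : ℝ → ℝ)
    (hf₁ : f₁ = fun t => cseq n * (oddRoot n (t - 1/2) + 2))
    (hg₁ : g₁ = fun _ => (1:ℝ)) :
    ContinuousOn f₁ (Icc 0 1) ∧ ContinuousOn g₁ (Icc 0 1) ∧
    (∀ t ∈ Icc (0:ℝ) 1, 0 < f₁ t) ∧ (∀ t ∈ Icc (0:ℝ) 1, 0 < g₁ t) ∧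
    (∃ t ∈ Icc (0:ℝ) 1, f₁ t ≠ g₁ t) ∧
    (∀ t ∈ Icc (0:ℝ) 1,
      (∫ u in (0:ℝ)..1, Kn n t u * f₁ u ^ 2) = g₁ t ∧
      (∫ u in (0:ℝ)..1, Kn n t u * g₁ u ^ 2) = f₁ t) ∧
    (∀ t ∈ Icc (0:ℝ) 1,
      (∫ u in (0:ℝ)..1, Kn n t u * g₁ u ^ 2) = f₁ t ∧
      (∫ u in (0:ℝ)..1, Kn n t u * f₁ u ^ 2) = g₁ t) := by
  have hn0 : n ≠ 0 := hn.pos.ne'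
  have hcpos := cseq_pos hn
  have hcne : cseq n ≠ 0 := hcpos.ne'
  -- positivity of r + 2 on the relevant range
  have hr2 : ∀ u : ℝ, u ∈ Icc (0:ℝ) 1 → 0 < oddRoot n (u - 1/2) + 2 := by
    intro u hu
    exact oddRoot_add_two_pos hn (abs_le.2 ⟨by linarith [hu.1], by linarith [hu.2]⟩)
  -- continuity of f₁
  have hf₁cont : Continuous f₁ := by
    rw [hf₁]
    exact continuous_const.mul
      (((continuous_oddRoot hn0).comp (continuous_id.sub continuous_const)).add
        continuous_const)
  -- the two integral identities
  have key : ∀ t ∈ Icc (0:ℝ) 1,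
      (∫ u in (0:ℝ)..1, Kn n t u * f₁ u ^ 2) = g₁ t ∧
      (∫ u in (0:ℝ)..1, Kn n t u * g₁ u ^ 2) = f₁ t := by
    intro t ht
    constructor
    · -- first identity : ∫ K f₁² = 1
      have hcong : EqOn (fun u => Kn n t u * f₁ u ^ 2)
          (fun u => 1 - (bseq n * cseq n ^ 3 * oddRoot n (t - 1/2)) *
            (oddRoot n (u - 1/2) * ((oddRoot n (u - 1/2)) ^ 2 - 4) ^ 2))
          (uIcc (0:ℝ) 1) := by
        intro u hu
        rw [uIcc_of_le zero_le_one] at hu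
        have hd := hr2 u hu
        show Kn n t u * f₁ u ^ 2 = _
        have hd' : oddRoot n (u - 1/2) + 2 ≠ 0 := hd.ne'
        have hD : cseq n ^ 2 * (oddRoot n (u - 1/2) + 2) ^ 2 ≠ 0 :=
          mul_ne_zero (pow_ne_zero 2 hcne) (pow_ne_zero 2 hd')
        simp only [Kn, hf₁]
        rw [oddRoot_sq hn, mul_pow, div_mul_cancel₀ _ hD]
        ring
      rw [intervalIntegral.integral_congr hcong, hg₁]
      have hG : Continuous fun u : ℝ =>
          oddRoot n (u - 1/2) * ((oddRoot n (u - 1/2)) ^ 2 - 4) ^ 2 := by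
        have := (continuous_oddRoot hn0).comp (continuous_id.sub (continuous_const (y := (1/2:ℝ))))
        exact this.mul (((this.pow 2).sub continuous_const).pow 2)
      rw [intervalIntegral.integral_sub (intervalIntegrable_const)
        (show IntervalIntegrable (fun u => bseq n * cseq n ^ 3 * oddRoot n (t - 1/2) *
          (oddRoot n (u - 1/2) * ((oddRoot n (u - 1/2)) ^ 2 - 4) ^ 2)) volume 0 1 from
          (continuous_const.mul hG).intervalIntegrable 0 1),
        intervalIntegral.integral_const_mul, int_odd1 hn]
      simp
    · -- second identity : ∫ K = f₁ t
      have hcong : EqOn (fun u => Kn n t u * g₁ u ^ 2)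
          (fun u => (cseq n ^ 2)⁻¹ * (1 / (2 + oddRoot n (u - 1/2)) ^ 2)
            - (bseq n * cseq n * oddRoot n (t - 1/2)) * ((oddRoot n (u - 1/2)) ^ 3
              - 4 * (oddRoot n (u - 1/2)) ^ 2 + 4 * oddRoot n (u - 1/2)))
          (uIcc (0:ℝ) 1) := by
        intro u hu
        rw [uIcc_of_le zero_le_one] at hu
        have hd := hr2 u hu
        have hd' : oddRoot n (u - 1/2) + 2 ≠ 0 := hd.ne'
        have hd'' : 2 + oddRoot n (u - 1/2) ≠ 0 := by linarith
        show Kn n t u * g₁ u ^ 2 = _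
        have hD : cseq n ^ 2 * (oddRoot n (u - 1/2) + 2) ^ 2 ≠ 0 :=
          mul_ne_zero (pow_ne_zero 2 hcne) (pow_ne_zero 2 hd')
        simp only [Kn, hg₁, one_pow, mul_one]
        rw [oddRoot_sq hn, div_eq_iff hD]
        have e1 : (cseq n ^ 2)⁻¹ * cseq n ^ 2 = 1 := inv_mul_cancel₀ (pow_ne_zero 2 hcne)
        have e2 : (1:ℝ) / (2 + oddRoot n (u - 1/2)) ^ 2 * (oddRoot n (u - 1/2) + 2) ^ 2 = 1 := by
          rw [show (oddRoot n (u - 1/2) + 2) ^ 2 = (2 + oddRoot n (u - 1/2)) ^ 2 by ring,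
            one_div, inv_mul_cancel₀ (pow_ne_zero 2 hd'')]
        linear_combination (-(1 / (2 + oddRoot n (u - 1/2)) ^ 2 *
          (oddRoot n (u - 1/2) + 2) ^ 2)) * e1 - e2
      rw [intervalIntegral.integral_congr hcong]
      -- integrability of the two pieces
      have hcontr : Continuous fun u : ℝ => oddRoot n (u - 1/2) :=
        (continuous_oddRoot hn0).comp (continuous_id.sub continuous_const)
      have hP1 : ContinuousOn (fun u : ℝ => (cseq n ^ 2)⁻¹ * (1 / (2 + oddRoot n (u - 1/2)) ^ 2))
          (uIcc (0:ℝ) 1) := by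
        apply ContinuousOn.mul continuousOn_const
        apply ContinuousOn.div continuousOn_const
        · exact ((continuous_const.add hcontr).pow 2).continuousOn
        · intro u hu
          rw [uIcc_of_le zero_le_one] at hu
          have := hr2 u hu
          exact pow_ne_zero 2 (by linarith)
      have hP2 : Continuous fun u : ℝ => (bseq n * cseq n * oddRoot n (t - 1/2)) * ((oddRoot n (u - 1/2)) ^ 3
          - 4 * (oddRoot n (u - 1/2)) ^ 2 + 4 * oddRoot n (u - 1/2)) :=
        continuous_const.mul (((hcontr.pow 3).sub (continuous_const.mul (hcontr.pow 2))).add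
          (continuous_const.mul hcontr))
      rw [intervalIntegral.integral_sub (hP1.intervalIntegrable) (hP2.intervalIntegrable 0 1),
        intervalIntegral.integral_const_mul, intervalIntegral.integral_const_mul]
      -- first piece
      have hshift1 : (∫ u in (0:ℝ)..1, 1 / (2 + oddRoot n (u - 1/2)) ^ 2)
          = ∫ v in (-(1/2):ℝ)..(1/2), 1 / (2 + oddRoot n v) ^ 2 := by
        have h := intervalIntegral.integral_comp_sub_right
          (f := fun v : ℝ => 1 / (2 + oddRoot n v) ^ 2) (a := (0:ℝ)) (b := 1) (1/2)
        rw [h, show (0:ℝ) - 1/2 = -(1/2) by norm_num, show (1:ℝ) - 1/2 = 1/2 by norm_num]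
      -- second piece
      have hshift2 : (∫ u in (0:ℝ)..1, ((oddRoot n (u - 1/2)) ^ 3
            - 4 * (oddRoot n (u - 1/2)) ^ 2 + 4 * oddRoot n (u - 1/2)))
          = ∫ v in (-(1/2):ℝ)..(1/2),
              ((oddRoot n v) ^ 3 - 4 * (oddRoot n v) ^ 2 + 4 * oddRoot n v) := by
        have h := intervalIntegral.integral_comp_sub_right
          (f := fun v : ℝ => (oddRoot n v) ^ 3 - 4 * (oddRoot n v) ^ 2 + 4 * oddRoot n v)
          (a := (0:ℝ)) (b := 1) (1/2)
        rw [h, show (0:ℝ) - 1/2 = -(1/2) by norm_num, show (1:ℝ) - 1/2 = 1/2 by norm_num]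
      have hsplit : (∫ v in (-(1/2):ℝ)..(1/2),
              ((oddRoot n v) ^ 3 - 4 * (oddRoot n v) ^ 2 + 4 * oddRoot n v))
          = - 4 * (2 * ((1/2:ℝ) ^ (2/(n:ℝ) + 1)) / (2/(n:ℝ) + 1)) := by
        have hco : Continuous (oddRoot n) := continuous_oddRoot hn0
        have hEq : EqOn (fun v : ℝ => (oddRoot n v) ^ 3 - 4 * (oddRoot n v) ^ 2
              + 4 * oddRoot n v)
            (fun v : ℝ => ((oddRoot n v) ^ 3 + 4 * oddRoot n v) - 4 * (oddRoot n v) ^ 2)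
            (uIcc (-(1/2):ℝ) (1/2)) := fun v _ => by ring
        rw [intervalIntegral.integral_congr hEq,
          intervalIntegral.integral_sub
            (show IntervalIntegrable (fun v => oddRoot n v ^ 3 + 4 * oddRoot n v) volume
              (-(1/2)) (1/2) from
              ((hco.pow 3).add (continuous_const.mul hco)).intervalIntegrable _ _)
            (show IntervalIntegrable (fun v => 4 * oddRoot n v ^ 2) volume (-(1/2)) (1/2) from
              (continuous_const.mul (hco.pow 2)).intervalIntegrable _ _),
          int_odd2 hn, intervalIntegral.integral_const_mul, int_sq hn]
        ring
      have hAval : (∫ v in (-(1/2):ℝ)..(1/2), 1 / (2 + oddRoot n v) ^ 2)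
          = 2 * cseq n ^ 3 := by
        have h := cseq_cube hn
        linarith
      rw [hshift1, hshift2, hsplit, hAval, hf₁]
      have h1 : (cseq n ^ 2)⁻¹ * (2 * cseq n ^ 3) = 2 * cseq n := by
        field_simp
      have h2 : bseq n * cseq n * oddRoot n (t - 1/2) *
          (-4 * (2 * ((1/2:ℝ) ^ (2/(n:ℝ) + 1)) / (2/(n:ℝ) + 1)))
          = -(cseq n * oddRoot n (t - 1/2)) := by
        linear_combination (-(cseq n * oddRoot n (t - 1/2))) * bseq_key hn
      rw [h1, h2]
      ring
  refine ⟨hf₁cont.continuousOn, by rw [hg₁]; exact continuousOn_const, ?_, ?_, ?_, key,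
    fun t ht => ⟨(key t ht).2, (key t ht).1⟩⟩
  · intro t ht
    rw [hf₁]
    exact mul_pos hcpos (hr2 t ht)
  · intro t ht
    rw [hg₁]
    norm_num
  · -- f₁ ≠ g₁ somewhere
    by_contra hcon
    push_neg at hcon
    have h0 := hcon 0 (by norm_num)
    have h1 := hcon 1 (by norm_num)
    rw [hf₁, hg₁] at h0 h1
    simp only at h0 h1
    have e0 : oddRoot n ((0:ℝ) - 1/2) = - oddRoot n (1/2) := by
      rw [show (0:ℝ) - 1/2 = -(1/2) by norm_num, oddRoot_neg hn0]
    have e1 : oddRoot n ((1:ℝ) - 1/2) = oddRoot n (1/2) := by norm_num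
    have hrpos : 0 < oddRoot n (1/2:ℝ) := by
      rw [oddRoot_of_nonneg (by norm_num : (0:ℝ) ≤ 1/2)]
      exact Real.rpow_pos_of_pos (by norm_num) _
    rw [e0] at h0
    rw [e1] at h1
    nlinarith [h0, h1, hcpos, hrpos]
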